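/- arXiv:1202.4507 — 4 statements merged into one kernel-verified Lean document; each statement's English description precedes it below -/
import Mathlib

section
/- In the Dubins-Spanier moving-knife protocol with n players, each player receives a piece whose value under that player's own utility function is at least 1/n. -/
/-- Simple fairness of the Dubins-Spanier moving-knife protocol. Players are
`Fin n`, player `i` has utility density `u i` (positive, continuous, integrating to 1 on
[0,1]). An execution of the protocol is a permutation `σ` (the winner of round `r` is `σ r`)
together with cut points `x : ℕ → ℝ`, `x 0 = 1`, `x n = 0`, decreasing; in each round
`r < n - 1` with `n - r` players remaining and cake `[0, x r]`, every remaining player `i`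
(one with `σ.symm i ≥ r`) has a threshold `t` with `μᵢ([t, x r]) = μᵢ([0, x r])/(n-r)` and
`t ≤ x (r+1)`, and the winner's threshold is exactly `x (r+1)`; the winner of round `r`
receives `[x (r+1), x r]` (the last player receives `[0, x (n-1)] = [x n, x (n-1)]`).
Then every player values their own piece at least `1/n`. -/
theorem stmt3 (n : ℕ) (hn : 1 ≤ n) (u : Fin n → ℝ → ℝ)
    (hcont : ∀ i, Continuous (u i)) (hpos : ∀ i z, 0 < u i z)
    (hone : ∀ i, (∫ z in (0:ℝ)..1, u i z) = 1)
    (σ : Equiv.Perm (Fin n)) (x : ℕ → ℝ)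
    (hx0 : x 0 = 1) (hxn : x n = 0)
    (hdec : ∀ r : ℕ, r < n → 0 ≤ x (r + 1) ∧ x (r + 1) < x r)
    (hwin : ∀ r : Fin n, (r : ℕ) < n - 1 →
      (∫ z in (x ((r : ℕ) + 1))..(x (r : ℕ)), u (σ r) z) =
        (∫ z in (0:ℝ)..(x (r : ℕ)), u (σ r) z) / ((n - (r : ℕ) : ℕ) : ℝ))
    (hmax : ∀ r : Fin n, (r : ℕ) < n - 1 → ∀ i : Fin n, (r : ℕ) ≤ ((σ.symm i : Fin n) : ℕ) →
      ∃ t : ℝ, t ∈ Set.Ico (0:ℝ) (x (r : ℕ)) ∧ t ≤ x ((r : ℕ) + 1) ∧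
        (∫ z in t..(x (r : ℕ)), u i z) =
          (∫ z in (0:ℝ)..(x (r : ℕ)), u i z) / ((n - (r : ℕ) : ℕ) : ℝ)) :
    ∀ i : Fin n,
      (1 : ℝ) / n ≤ ∫ z in (x (((σ.symm i : Fin n) : ℕ) + 1))..(x ((σ.symm i : Fin n) : ℕ)), u i z := by

  intro i
  set r : ℕ := ((σ.symm i : Fin n) : ℕ) with hr
  have hrn : r < n := (σ.symm i).isLt
  have hnpos : (0:ℝ) < n := by exact_mod_cast hn
  have hint : ∀ (j : Fin n) (a b : ℝ), IntervalIntegrable (u j) MeasureTheory.volume a b :=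
    fun j a b => (hcont j).intervalIntegrable a b
  have key : ∀ s, s ≤ r → ((n - s : ℕ) : ℝ) / n ≤ ∫ z in (0:ℝ)..(x s), u i z := by
    intro s hs
    induction s with
    | zero =>
      rw [hx0, hone i, Nat.sub_zero]
      rw [div_le_one hnpos]
    | succ s ih =>
      have hsr : s ≤ r := Nat.le_of_succ_le hs
      have ihs := ih hsr
      have hsn1 : s < n - 1 := by omega
      have hsn : s < n := by omega
      obtain ⟨t, ht0, htle, hteq⟩ := hmax ⟨s, hsn⟩ hsn1 i (by simpa using hsr)
      simp only at ht0 htle hteq ⊢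
      have hsplit : (∫ z in (0:ℝ)..(x (s+1)), u i z) + (∫ z in (x (s+1))..(x s), u i z)
          = ∫ z in (0:ℝ)..(x s), u i z :=
        intervalIntegral.integral_add_adjacent_intervals (hint i _ _) (hint i _ _)
      have hBle : (∫ z in (x (s+1))..(x s), u i z) ≤ ∫ z in t..(x s), u i z := by
        have h2 : (∫ z in t..(x (s+1)), u i z) + (∫ z in (x (s+1))..(x s), u i z)
            = ∫ z in t..(x s), u i z :=
          intervalIntegral.integral_add_adjacent_intervals (hint i _ _) (hint i _ _)
        have hnn : (0:ℝ) ≤ ∫ z in t..(x (s+1)), u i z :=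
          intervalIntegral.integral_nonneg htle (fun z _ => (hpos i z).le)
        linarith
      set A : ℝ := ∫ z in (0:ℝ)..(x s), u i z with hA
      set C : ℝ := ∫ z in (0:ℝ)..(x (s+1)), u i z with hC
      set k : ℝ := ((n - s : ℕ) : ℝ) with hk
      have hk2 : (2:ℝ) ≤ k := by
        rw [hk]; exact_mod_cast Nat.le_sub_of_add_le (by omega)
      have hkpos : (0:ℝ) < k := by linarith
      have hcast : ((n - (s+1) : ℕ) : ℝ) = k - 1 := by
        rw [hk, Nat.cast_sub (by omega : s + 1 ≤ n), Nat.cast_sub hsn.le]; push_cast; ring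
      rw [hcast]
      have hBA : (∫ z in (x (s+1))..(x s), u i z) ≤ A / k := by
        rw [hA, hk]; exact hteq ▸ hBle
      have hAk : k / n ≤ A := by rw [hA, hk]; exact ihs
      have hCA : C = A - (∫ z in (x (s+1))..(x s), u i z) := by
        rw [hA, hC]; linarith [hsplit]
      rw [hCA]
      rw [div_le_iff₀ hnpos]
      rw [div_le_iff₀ hnpos] at hAk
      have hAdk : A / k * k = A := div_mul_cancel₀ A (ne_of_gt hkpos)
      nlinarith [mul_pos hnpos hkpos, hBA, hAk]
  rcases Nat.lt_or_ge r (n - 1) with hcase | hcase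
  · have hw := hwin ⟨r, hrn⟩ hcase
    have : σ ⟨r, hrn⟩ = i := by
      have : (⟨r, hrn⟩ : Fin n) = σ.symm i := by simp [hr]
      rw [this, Equiv.apply_symm_apply]
    rw [this] at hw
    simp only at hw
    rw [hw]
    have hAk := key r le_rfl
    set k : ℝ := ((n - r : ℕ) : ℝ) with hk
    have hk1 : (1:ℝ) ≤ k := by
      rw [hk]; exact_mod_cast Nat.le_sub_of_add_le (by omega)
    have hkpos : (0:ℝ) < k := by linarith
    rw [div_le_div_iff₀ hnpos hkpos]
    rw [div_le_iff₀ hnpos] at hAk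
    nlinarith
  · have hreq : r = n - 1 := by omega
    have hrn1 : r + 1 = n := by omega
    rw [hrn1, hxn]
    have h := key r le_rfl
    have : (n - r : ℕ) = 1 := by omega
    rw [this] at h
    simpa using h
end

section
/- The Sgall-Woeginger protocol is simply fair: every player receives a piece of value at least 1/n under their own utility. -/
/-- Simple fairness of the Sgall-Woeginger protocol. Each player `i` declares
marks `X i 0 = 0 < X i 1 < ... < X i n = 1` with `μᵢ([X i j, X i (j+1)]) = 1/n`. An execution
is a permutation `σ` (winner of round `r` is `σ r`) and cut points `y : ℕ → ℝ`, `y 0 = 0`,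
`y n = 1`, where in round `r < n - 1` the cut `y (r+1)` equals the winner's mark
`X (σ r) (r+1)` and is minimal among the marks `X i (r+1)` of remaining players
(those with `σ.symm i ≥ r`); the winner of round `r` receives `[y r, y (r+1)]` and the
last player receives `[y (n-1), y n] = [y (n-1), 1]`. Then every player values their own
piece at least `1/n`. -/
theorem stmt6 (n : ℕ) (hn : 1 ≤ n) (u : Fin n → ℝ → ℝ)
    (hcont : ∀ i, Continuous (u i)) (hpos : ∀ i z, 0 < u i z)
    (X : Fin n → ℕ → ℝ)
    (hX0 : ∀ i, X i 0 = 0) (hXn : ∀ i, X i n = 1)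
    (hXinc : ∀ i, ∀ j : ℕ, j < n → X i j < X i (j + 1))
    (hmark : ∀ i, ∀ j : ℕ, j < n →
      (∫ z in (X i j)..(X i (j + 1)), u i z) = 1 / n)
    (σ : Equiv.Perm (Fin n)) (y : ℕ → ℝ)
    (hy0 : y 0 = 0) (hyn : y n = 1)
    (hwin : ∀ r : Fin n, (r : ℕ) < n - 1 → y ((r : ℕ) + 1) = X (σ r) ((r : ℕ) + 1))
    (hmin : ∀ r : Fin n, (r : ℕ) < n - 1 → ∀ i : Fin n, (r : ℕ) ≤ ((σ.symm i : Fin n) : ℕ) →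
      y ((r : ℕ) + 1) ≤ X i ((r : ℕ) + 1)) :
    ∀ i : Fin n,
      (1 : ℝ) / n ≤ ∫ z in (y ((σ.symm i : Fin n) : ℕ))..(y (((σ.symm i : Fin n) : ℕ) + 1)), u i z := by
  intro i
  set k : ℕ := ((σ.symm i : Fin n) : ℕ) with hk
  have hkn : k < n := (σ.symm i).isLt
  have hI : ∀ a b : ℝ, IntervalIntegrable (u i) MeasureTheory.volume a b :=
    fun a b => (hcont i).intervalIntegrable a b
  have hend : y (k + 1) = X i (k + 1) := by
    by_cases h : k < n - 1
    · have := hwin (σ.symm i) h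
      simpa [← hk, Equiv.apply_symm_apply] using this
    · have hkeq : k + 1 = n := by omega
      rw [hkeq, hyn, hXn]
  have hstart : y k ≤ X i k := by
    rcases Nat.eq_zero_or_pos k with h0 | h1
    · rw [h0, hy0, hX0]
    · have hlt : k - 1 < n := by omega
      have h2 : ((⟨k-1, hlt⟩ : Fin n) : ℕ) < n - 1 := by show k - 1 < n - 1; omega
      have := hmin ⟨k-1, hlt⟩ h2 i (by simp only [← hk]; show k - 1 ≤ k; omega)
      simpa [Nat.sub_add_cancel h1] using this
  have split : (∫ z in (y k)..(X i (k+1)), u i z)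
      = (∫ z in (y k)..(X i k), u i z) + ∫ z in (X i k)..(X i (k+1)), u i z :=
    (intervalIntegral.integral_add_adjacent_intervals (hI _ _) (hI _ _)).symm
  have h1 : 0 ≤ ∫ z in (y k)..(X i k), u i z :=
    intervalIntegral.integral_nonneg hstart (fun z _ => (hpos i z).le)
  rw [hend, split, hmark i k hkn]
  linarith
end

section
/- In the Endriss counterexample with utilities u₂ ≡ 1 and u₃ as given, if in the second round (cake [0,5/6], 2 players) player 2 truthfully declares 5/12 it obtains utility 5/12, but if player 2 falsely declares 1/3 it wins with piece [1/3, 5/6] and obtains utility 1/2 > 5/12. Hence truth-telling is not optimal. -/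
open MeasureTheory intervalIntegral

lemma step_integrable (a b : ℝ) :
    IntervalIntegrable (fun z => if z ≤ 1/3 then (2:ℝ) else 1/2) volume a b := by
  apply IntervalIntegrable.mono_fun' (_root_.intervalIntegrable_const (c := (2:ℝ)))
  · exact (Measurable.ite (measurableSet_le measurable_id measurable_const)
      measurable_const measurable_const).aestronglyMeasurable
  · filter_upwards with x
    by_cases h : x ≤ 1/3
    · rw [if_pos h]; simp [Real.norm_eq_abs]
    · rw [if_neg h]; simp [Real.norm_eq_abs]; norm_num

lemma step_integral (a b : ℝ) (ha : a ≤ 1/3) (hb : (1/3:ℝ) ≤ b) :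
    (∫ z in a..b, (if z ≤ 1/3 then (2:ℝ) else 1/2)) = 2*(1/3 - a) + (1/2)*(b - 1/3) := by
  rw [← integral_add_adjacent_intervals (step_integrable a (1/3)) (step_integrable (1/3) b)]
  have h1 : (∫ z in a..(1/3:ℝ), (if z ≤ 1/3 then (2:ℝ) else 1/2)) = 2*(1/3 - a) := by
    rw [integral_congr (g := fun _ => (2:ℝ))]
    · simp [mul_comm]
    · intro x hx
      rw [Set.uIcc_of_le ha] at hx
      exact if_pos hx.2
  have h2 : (∫ z in (1/3:ℝ)..b, (if z ≤ 1/3 then (2:ℝ) else 1/2)) = (1/2)*(b - 1/3) := by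
    rw [intervalIntegral.integral_congr_ae (g := fun _ => (1/2:ℝ))]
    · simp [mul_comm]
    · filter_upwards with x hx
      rw [Set.uIoc_of_le hb] at hx
      exact if_neg (not_le.2 hx.1)
  rw [h1, h2]

/-- Endriss counterexample. With u₂ ≡ 1 and u₃ as in the paper, in the second
round (cake [0,5/6], two players): player 3's honest declaration is 11/48 (characterized by
∫_{11/48}^{5/6} u₃ = (1/2)∫₀^{5/6} u₃); player 2's truthful declaration 5/12 yields utility
μ₂([5/12,5/6]) = 5/12, while the false declaration 1/3 beats 11/48 and yields
μ₂([1/3,5/6]) = 1/2 > 5/12; hence truth-telling is not optimal. -/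
theorem stmt10 :
    (∫ z in (11/48 : ℝ)..(5/6), (if z ≤ 1/3 then (2:ℝ) else 1/2)) =
      (1/2) * (∫ z in (0:ℝ)..(5/6), (if z ≤ 1/3 then (2:ℝ) else 1/2)) ∧
    (∫ z in (5/12 : ℝ)..(5/6), (1:ℝ)) = 5/12 ∧
    (11/48 : ℝ) < 1/3 ∧
    (∫ z in (1/3 : ℝ)..(5/6), (1:ℝ)) = 1/2 ∧
    (5/12 : ℝ) < 1/2 := by
  refine ⟨?_, ?_, by norm_num, ?_, by norm_num⟩
  · rw [step_integral _ _ (by norm_num) (by norm_num),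
      step_integral _ _ (by norm_num) (by norm_num)]
    norm_num
  · simp; norm_num
  · simp; norm_num
end

section
/- If in each of the first j rounds of the Dubins-Spanier protocol player i does not win, then player i's value for the cake remaining after round j is at least (n−j)/n, and strictly greater if some winner's cut strictly exceeded player i's threshold in some round. -/
set_option maxHeartbeats 1000000


/-- In the Dubins-Spanier protocol (setup as in stmt3, with threshold function
`t i r` for player `i` in round `r`), if player `i` does not win any of the first `j` rounds,
then `μᵢ([0, x j]) ≥ (n − j)/n`; the inequality is strict if in some earlier round the
winner's cut strictly exceeded player i's threshold. -/
theorem stmt17 (n : ℕ) (hn : 1 ≤ n) (u : Fin n → ℝ → ℝ)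
    (hcont : ∀ i, Continuous (u i)) (hpos : ∀ i z, 0 < u i z)
    (hone : ∀ i, (∫ z in (0:ℝ)..1, u i z) = 1)
    (σ : Equiv.Perm (Fin n)) (x : ℕ → ℝ) (t : Fin n → ℕ → ℝ)
    (hx0 : x 0 = 1) (hxn : x n = 0)
    (hdec : ∀ r : ℕ, r < n → 0 ≤ x (r + 1) ∧ x (r + 1) < x r)
    (hthr : ∀ (i : Fin n) (r : ℕ), r < n - 1 → r ≤ ((σ.symm i : Fin n) : ℕ) →
      t i r ∈ Set.Ico (0:ℝ) (x r) ∧ t i r ≤ x (r + 1) ∧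
      (∫ z in (t i r)..(x r), u i z) = (∫ z in (0:ℝ)..(x r), u i z) / ((n - r : ℕ) : ℝ))
    (hwin : ∀ r : Fin n, (r : ℕ) < n - 1 → x ((r : ℕ) + 1) = t (σ r) (r : ℕ)) :
    ∀ j : ℕ, j ≤ n - 1 → ∀ i : Fin n, j ≤ ((σ.symm i : Fin n) : ℕ) →
      (((n - j : ℕ) : ℝ) / n ≤ ∫ z in (0:ℝ)..(x j), u i z) ∧
      ((∃ r : ℕ, r < j ∧ t i r < x (r + 1)) →
        ((n - j : ℕ) : ℝ) / n < ∫ z in (0:ℝ)..(x j), u i z) := by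
  have hn0 : (0:ℝ) < (n:ℝ) := by exact_mod_cast hn
  intro j
  induction j with
  | zero =>
    intro _ i _
    constructor
    · rw [hx0, hone i]
      simp [div_self (ne_of_gt hn0)]
    · rintro ⟨r, hr, -⟩; omega
  | succ j ih =>
    intro hj i hi
    have hjn1 : j < n - 1 := by omega
    have hjn : j < n := by omega
    have hji : j ≤ ((σ.symm i : Fin n) : ℕ) := by omega
    obtain ⟨⟨ha0, hac⟩, hab, heq⟩ := hthr i j hjn1 hji
    obtain ⟨hb0, hbc⟩ := hdec j hjn
    have ihm := ih (by omega) i hji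
    set V := ∫ z in (0:ℝ)..(x j), u i z with hV
    set a := t i j with hadef
    set b := x (j + 1) with hbdef
    set c := x j
    have intgr : ∀ p q : ℝ, IntervalIntegrable (u i) MeasureTheory.volume p q :=
      fun p q => (hcont i).intervalIntegrable p q
    have hsplit1 : (∫ z in (0:ℝ)..b, u i z) + (∫ z in b..c, u i z) = V :=
      intervalIntegral.integral_add_adjacent_intervals (intgr 0 b) (intgr b c)
    have hsplit2 : (∫ z in a..b, u i z) + (∫ z in b..c, u i z) = ∫ z in a..c, u i z :=
      intervalIntegral.integral_add_adjacent_intervals (intgr a b) (intgr b c)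
    set k : ℝ := ((n - j : ℕ) : ℝ) with hkdef
    have hk2 : (2:ℝ) ≤ k := by
      have h2 : (2:ℕ) ≤ n - j := by omega
      rw [hkdef]; exact_mod_cast h2
    have hk0 : (0:ℝ) < k := by linarith
    have hkn : ((n - (j+1) : ℕ) : ℝ) = k - 1 := by
      have h1 : n - (j+1) = (n - j) - 1 := by omega
      rw [h1, hkdef]
      have : (1:ℕ) ≤ n - j := by omega
      push_cast [Nat.cast_sub this]
      ring
    clear_value V a b c k
    have hE : 0 ≤ ∫ z in a..b, u i z :=
      intervalIntegral.integral_nonneg hab (fun z _ => (hpos i z).le)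
    have heq' : (∫ z in a..c, u i z) = V / k := heq
    have hkey : (∫ z in (0:ℝ)..b, u i z) = V - V / k + ∫ z in a..b, u i z := by
      have : (∫ z in b..c, u i z) = V / k - ∫ z in a..b, u i z := by
        linarith [hsplit2, heq']
      linarith [hsplit1, this]
    have hVlb : k / n ≤ V := ihm.1
    have hw : V / k * k = V := div_mul_cancel₀ V (ne_of_gt hk0)
    have hVn : k ≤ V * n := by rw [div_le_iff₀ hn0] at hVlb; linarith
    have hwn : 1 ≤ V / k * n := by nlinarith [hVn, hk0, hw]
    have hmain : (k - 1) / n ≤ V - V / k := by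
      rw [div_le_iff₀ hn0]
      nlinarith [hwn, hk2, hw]
    rw [hkn]
    constructor
    · rw [hkey]; linarith
    · rintro ⟨r, hr, hlt⟩
      rcases lt_or_eq_of_le (Nat.lt_succ_iff.mp hr) with hrj | hrj
      · have hVstrict : k / n < V := ihm.2 ⟨r, hrj, hlt⟩
        have hVn' : k < V * n := by rw [div_lt_iff₀ hn0] at hVstrict; linarith
        have hwn' : 1 < V / k * n := by nlinarith [hVn', hk0, hw]
        have : (k - 1) / n < V - V / k := by
          rw [div_lt_iff₀ hn0]
          nlinarith [hwn', hk2, hw]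
        rw [hkey]; linarith
      · subst hrj
        rw [← hadef, ← hbdef] at hlt
        have hEpos : 0 < ∫ z in a..b, u i z :=
          intervalIntegral.intervalIntegral_pos_of_pos (intgr a b) (hpos i) hlt
        rw [hkey]; linarith
end
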